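/- Hindley-Rosen lemma: if binary relations r and s on a type α are each confluent, and r and s commute (whenever Star r a b and Star s a c, there exists d with Star s b d and Star r c d), then their union (fun a b => r a b ∨ s a b) is confluent. -/

import Mathlib

namespace Metatheory

def Star {α : Type*} (r : α → α → Prop) : α → α → Prop :=
  Relation.ReflTransGen r

def Joinable {α : Type*} (r : α → α → Prop) (b c : α) : Prop :=
  ∃ d, Star r b d ∧ Star r c d

def Confluent {α : Type*} (r : α → α → Prop) : Prop :=
  ∀ a b c, Star r a b → Star r a c → Joinable r b c

def Commute {α : Type*} (r s : α → α → Prop) : Prop :=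
  ∀ a b c, Star r a b → Star s a c → ∃ d, Star s b d ∧ Star r c d

theorem hindley_rosen {α : Type*} (r s : α → α → Prop)
    (hr : Confluent r) (hs : Confluent s) (hc : Commute r s) :
    Confluent (fun a b => r a b ∨ s a b) := by
  set u : α → α → Prop := fun a b => r a b ∨ s a b with hu
  -- big-step relation
  set R : α → α → Prop := fun a b => Star r a b ∨ Star s a b with hR
  -- R has the diamond property
  have diamond : ∀ a b c, R a b → R a c → ∃ d, R b d ∧ R c d := by
    rintro a b c (hab | hab) (hac | hac)
    · obtain ⟨d, h1, h2⟩ := hr a b c hab hac; exact ⟨d, Or.inl h1, Or.inl h2⟩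
    · obtain ⟨d, h1, h2⟩ := hc a b c hab hac; exact ⟨d, Or.inr h1, Or.inl h2⟩
    · obtain ⟨d, h1, h2⟩ := hc a c b hac hab; exact ⟨d, Or.inl h2, Or.inr h1⟩
    · obtain ⟨d, h1, h2⟩ := hs a b c hab hac; exact ⟨d, Or.inr h1, Or.inr h2⟩
  -- Star u = ReflTransGen R
  have star_r_le : ∀ a b, Star r a b → Star u a b := fun a b h =>
    Relation.ReflTransGen.mono (fun x y hxy => Or.inl hxy) a b h
  have star_s_le : ∀ a b, Star s a b → Star u a b := fun a b h =>
    Relation.ReflTransGen.mono (fun x y hxy => Or.inr hxy) a b h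
  have R_le : ∀ a b, R a b → Star u a b := by
    rintro a b (h | h); exacts [star_r_le a b h, star_s_le a b h]
  have forward : ∀ a b, Star u a b → Relation.ReflTransGen R a b := by
    intro a b h
    refine Relation.ReflTransGen.mono ?_ a b h
    rintro x y (h | h)
    exacts [Or.inl (Relation.ReflTransGen.single h), Or.inr (Relation.ReflTransGen.single h)]
  have backward : ∀ a b, Relation.ReflTransGen R a b → Star u a b := by
    intro a b h
    induction h with
    | refl => exact Relation.ReflTransGen.refl
    | tail _ hbc ih => exact ih.trans (R_le _ _ hbc)
  -- strip lemma for R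
  have strip : ∀ a b c, Relation.ReflTransGen R a b → R a c →
      ∃ d, R b d ∧ Relation.ReflTransGen R c d := by
    intro a b c hab hac
    induction hab generalizing c with
    | refl => exact ⟨c, hac, Relation.ReflTransGen.refl⟩
    | tail _ hbe ih =>
        obtain ⟨d, hd1, hd2⟩ := ih c hac
        obtain ⟨e, he1, he2⟩ := diamond _ _ _ hbe hd1
        exact ⟨e, he1, hd2.trans (Relation.ReflTransGen.single he2)⟩
  -- confluence of ReflTransGen R
  have conf : ∀ a b c, Relation.ReflTransGen R a b → Relation.ReflTransGen R a c →
      ∃ d, Relation.ReflTransGen R b d ∧ Relation.ReflTransGen R c d := by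
    intro a b c hab hac
    induction hac generalizing b with
    | refl => exact ⟨b, Relation.ReflTransGen.refl, hab⟩
    | @tail e f _ hef ih =>
        obtain ⟨d, hd1, hd2⟩ := ih b hab
        obtain ⟨g, hg1, hg2⟩ := strip e d f hd2 hef
        exact ⟨g, hd1.trans (Relation.ReflTransGen.single hg1), hg2⟩
  intro a b c hab hac
  obtain ⟨d, h1, h2⟩ := conf a b c (forward a b hab) (forward a c hac)
  exact ⟨d, backward _ _ h1, backward _ _ h2⟩

end Metatheory
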